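/- Let p ≥ 1 and n be natural numbers, let P be a p × p integer matrix and Q a p × n integer matrix, and suppose that every column of P and every column of Q has entries whose absolute values sum to at most 3. Then every entry of the matrix product adj(P) · Q has absolute value at most 3^p. -/

import Mathlib

set_option maxHeartbeats 1000000 in
lemma abs_det_le_col (p : ℕ) (M : Matrix (Fin p) (Fin p) ℤ)
    (h : ∀ j, ∑ i, |M i j| ≤ 3) : |M.det| ≤ 3 ^ p := by
  have h1 : |M.det| ≤ ∑ σ : Equiv.Perm (Fin p), ∏ j, |M (σ j) j| := by
    rw [Matrix.det_apply]
    refine (Finset.abs_sum_le_sum_abs _ _).trans ?_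
    refine Finset.sum_le_sum fun σ _ => ?_
    rcases Int.units_eq_one_or (Equiv.Perm.sign σ) with hs | hs <;>
      simp [hs, Finset.abs_prod]
  have h2 : (∑ σ : Equiv.Perm (Fin p), ∏ j, |M (σ j) j|)
      ≤ ∑ g : Fin p → Fin p, ∏ j, |M (g j) j| := by
    have hinj : ∀ σ ∈ (Finset.univ : Finset (Equiv.Perm (Fin p))), ∀ τ ∈ Finset.univ,
        (fun σ : Equiv.Perm (Fin p) => (σ : Fin p → Fin p)) σ
          = (fun σ : Equiv.Perm (Fin p) => (σ : Fin p → Fin p)) τ → σ = τ :=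
      fun σ _ τ _ h => Equiv.ext fun x => congrFun h x
    calc (∑ σ : Equiv.Perm (Fin p), ∏ j, |M (σ j) j|)
        = ∑ g ∈ Finset.univ.image (fun σ : Equiv.Perm (Fin p) => (σ : Fin p → Fin p)),
            ∏ j, |M (g j) j| :=
          (Finset.sum_image (f := fun g : Fin p → Fin p => ∏ j, |M (g j) j|)
            (g := fun σ : Equiv.Perm (Fin p) => (σ : Fin p → Fin p)) hinj).symm
      _ ≤ ∑ g : Fin p → Fin p, ∏ j, |M (g j) j| :=
          Finset.sum_le_sum_of_subset_of_nonneg (Finset.subset_univ _)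
            (fun g _ _ => Finset.prod_nonneg fun j _ => abs_nonneg _)
  have h3 : (∑ g : Fin p → Fin p, ∏ j, |M (g j) j|) = ∏ j, ∑ i, |M i j| := by
    rw [Finset.prod_univ_sum]
    rfl
  calc |M.det| ≤ ∑ g : Fin p → Fin p, ∏ j, |M (g j) j| := h1.trans h2
    _ = ∏ j, ∑ i, |M i j| := h3
    _ ≤ ∏ _j : Fin p, (3 : ℤ) := Finset.prod_le_prod
        (fun j _ => Finset.sum_nonneg fun i _ => abs_nonneg _) (fun j _ => h j)
    _ = 3 ^ p := by simp

/-- If every column of a `p × p` integer matrix `P` (`p ≥ 1`) and of a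
`p × n` integer matrix `Q` has absolute-value sum at most `3`, then every entry of
`adj(P) · Q` has absolute value at most `3 ^ p`. -/
theorem adjugate_mul_entry_bound (p n : ℕ) (hp : 1 ≤ p)
    (P : Matrix (Fin p) (Fin p) ℤ) (Q : Matrix (Fin p) (Fin n) ℤ)
    (hP : ∀ j, ∑ i, |P i j| ≤ 3) (hQ : ∀ j, ∑ i, |Q i j| ≤ 3) :
    ∀ i j, |(P.adjugate * Q) i j| ≤ 3 ^ p := by
  intro i j
  have hentry : (P.adjugate * Q) i j = (P.updateCol i (fun k => Q k j)).det := by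
    rw [← Matrix.cramer_apply, Matrix.cramer_eq_adjugate_mulVec]
    simp [Matrix.mulVec, Matrix.mul_apply, dotProduct]
  rw [hentry]
  apply abs_det_le_col
  intro j'
  by_cases hj : j' = i
  · subst hj
    simpa [Matrix.updateCol_apply] using hQ j
  · simpa [Matrix.updateCol_apply, hj] using hP j'
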